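/- Let C ⊆ V be an open set, D a balanced cone of directions spanning the finite-dimensional normed space V, and suppose f : C → ℝ admits at x₀ ∈ C a D-subcone, i.e., there exists a D-convex positively 1-homogeneous function g : V → ℝ with f(y) ≥ f(x₀) + g(y − x₀) for all y ∈ C. Then f has a subdifferential at x₀: there is a linear ℓ : V → ℝ with f(y) ≥ f(x₀) + ℓ(y − x₀) for all y ∈ C. -/

import Mathlib

open Set Metric


lemma convex_comb {u : ℝ → ℝ} (hu : ConvexOn ℝ univ u) (a b θ : ℝ) (h0 : 0 ≤ θ) (h1 : θ ≤ 1) :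
    u ((1-θ)*a + θ*b) ≤ (1-θ)*u a + θ*u b := by
  have := hu.2 (mem_univ a) (mem_univ b) (sub_nonneg.2 h1) h0 (by ring)
  simpa [smul_eq_mul] using this

/-- A convex function bounded on `[-ρ, ρ]` is Lipschitz on `[-ρ/2, ρ/2]`. -/
lemma oneVarLip {u : ℝ → ℝ} (hu : ConvexOn ℝ univ u) {ρ M m : ℝ} (hρ : 0 < ρ)
    (hub : ∀ t, |t| ≤ ρ → u t ≤ M) (hlb : ∀ t, |t| ≤ ρ → m ≤ u t) :
    ∀ a b, |a| ≤ ρ/2 → |b| ≤ ρ/2 → |u a - u b| ≤ ((M - m) * 2 / ρ) * |a - b| := by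
  have hMm : 0 ≤ M - m := by
    have h1 := hub 0 (by simp [le_of_lt hρ]); have h2 := hlb 0 (by simp [le_of_lt hρ]); linarith
  have key : ∀ a b, |a| ≤ ρ/2 → |b| ≤ ρ/2 → a ≤ b → u b - u a ≤ ((M - m) * 2 / ρ) * (b - a) := by
    intro a b ha hb hab
    rcases eq_or_lt_of_le hab with rfl | hab
    · simp
    have ha' := abs_le.1 ha; have hb' := abs_le.1 hb
    have hden : ρ - a > 0 := by linarith
    set θ := (b - a) / (ρ - a) with hθdef
    have hθ0 : 0 ≤ θ := div_nonneg (by linarith) (by linarith)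
    have hθ1 : θ ≤ 1 := by rw [hθdef, div_le_one hden]; linarith
    have hmul : θ * (ρ - a) = b - a := div_mul_cancel₀ _ (ne_of_gt hden)
    have hpt : (1-θ)*a + θ*ρ = b := by nlinarith [hmul]
    have hcc := convex_comb hu a ρ θ hθ0 hθ1
    rw [hpt] at hcc
    have huρ : u ρ ≤ M := hub ρ (by rw [abs_of_pos hρ])
    have hua : m ≤ u a := hlb a (by rw [abs_le]; constructor <;> linarith)
    have h1 : u b - u a ≤ θ * (M - m) := by nlinarith
    have hθle : θ ≤ (b - a) * 2 / ρ := by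
      rw [hθdef, div_le_div_iff₀ hden hρ]; nlinarith
    calc u b - u a ≤ θ * (M - m) := h1
      _ ≤ ((b - a) * 2 / ρ) * (M - m) := mul_le_mul_of_nonneg_right hθle hMm
      _ = ((M - m) * 2 / ρ) * (b - a) := by ring
  have key2 : ∀ a b, |a| ≤ ρ/2 → |b| ≤ ρ/2 → a ≤ b → u a - u b ≤ ((M - m) * 2 / ρ) * (b - a) := by
    intro a b ha hb hab
    rcases eq_or_lt_of_le hab with rfl | hab
    · simp
    have ha' := abs_le.1 ha; have hb' := abs_le.1 hb
    have hden : b + ρ > 0 := by linarith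
    set θ := (b - a) / (b + ρ) with hθdef
    have hθ0 : 0 ≤ θ := div_nonneg (by linarith) (by linarith)
    have hθ1 : θ ≤ 1 := by rw [hθdef, div_le_one hden]; linarith
    have hmul : θ * (b + ρ) = b - a := div_mul_cancel₀ _ (ne_of_gt hden)
    have hpt : (1-θ)*b + θ*(-ρ) = a := by nlinarith [hmul]
    have hcc := convex_comb hu b (-ρ) θ hθ0 hθ1
    rw [hpt] at hcc
    have huρ : u (-ρ) ≤ M := hub (-ρ) (by rw [abs_neg, abs_of_pos hρ])
    have hub' : m ≤ u b := hlb b (by rw [abs_le]; constructor <;> linarith)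
    have h1 : u a - u b ≤ θ * (M - m) := by nlinarith
    have hθle : θ ≤ (b - a) * 2 / ρ := by
      rw [hθdef, div_le_div_iff₀ hden hρ]; nlinarith
    calc u a - u b ≤ θ * (M - m) := h1
      _ ≤ ((b - a) * 2 / ρ) * (M - m) := mul_le_mul_of_nonneg_right hθle hMm
      _ = ((M - m) * 2 / ρ) * (b - a) := by ring
  intro a b ha hb
  rcases le_total a b with h | h
  · have h1 := key a b ha hb h; have h2 := key2 a b ha hb h
    have he : |a - b| = b - a := by rw [abs_sub_comm, abs_of_nonneg (by linarith)]
    rw [he, abs_le]; constructor <;> linarith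
  · have h1 := key b a hb ha h; have h2 := key2 b a hb ha h
    have he : |a - b| = a - b := abs_of_nonneg (by linarith)
    rw [he, abs_le]; constructor <;> linarith

section Lip
variable {V : Type*} [NormedAddCommGroup V] [NormedSpace ℝ V] {n : ℕ}

lemma sum_update_smul (b : Module.Basis (Fin n) ℝ V) (c : Fin n → ℝ) (i₀ : Fin n) (t : ℝ) :
    ∑ i, Function.update c i₀ t i • b i = (∑ i, c i • b i) - c i₀ • b i₀ + t • b i₀ := by
  have h1 := Finset.sum_eq_sum_sdiff_singleton_add (Finset.mem_univ i₀)
    (fun i => Function.update c i₀ t i • b i)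
  have h2 := Finset.sum_eq_sum_sdiff_singleton_add (Finset.mem_univ i₀) (fun i => c i • b i)
  have h3 : ∑ i ∈ Finset.univ \ {i₀}, Function.update c i₀ t i • b i
      = ∑ i ∈ Finset.univ \ {i₀}, c i • b i := by
    refine Finset.sum_congr rfl fun i hi => ?_
    have hne : i ≠ i₀ := fun h => (Finset.mem_sdiff.1 hi).2 (Finset.mem_singleton.2 h)
    rw [Function.update_of_ne hne]
  simp only [Function.update_self] at h1
  rw [h1, h3, h2]
  abel

lemma coord_bound (b : Module.Basis (Fin n) ℝ V) [FiniteDimensional ℝ V] :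
    ∃ Cb : ℝ, 0 < Cb ∧ ∀ (v : V) (i : Fin n), |b.repr v i| ≤ Cb * ‖v‖ := by
  refine ⟨1 + ∑ i, ‖LinearMap.toContinuousLinearMap (b.coord i)‖, by positivity, fun v i => ?_⟩
  have h1 : |b.repr v i| ≤ ‖LinearMap.toContinuousLinearMap (b.coord i)‖ * ‖v‖ := by
    have := (LinearMap.toContinuousLinearMap (b.coord i)).le_opNorm v
    simpa [Module.Basis.coord_apply] using this
  have h2 : ‖LinearMap.toContinuousLinearMap (b.coord i)‖
      ≤ 1 + ∑ j, ‖LinearMap.toContinuousLinearMap (b.coord j)‖ := by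
    have := Finset.single_le_sum
      (f := fun j => ‖LinearMap.toContinuousLinearMap (b.coord j)‖)
      (fun j _ => norm_nonneg _) (Finset.mem_univ i)
    linarith
  exact h1.trans (mul_le_mul_of_nonneg_right h2 (norm_nonneg v))

end Lip

section Lip2
variable {V : Type*} [NormedAddCommGroup V] [NormedSpace ℝ V] {n : ℕ}
variable (b : Module.Basis (Fin n) ℝ V) (f : V → ℝ) (x₀ : V)

/-- Upper bound on the unit cube by the max over vertices. -/
lemma cube_ub
    (hconv : ∀ (x : V) (i : Fin n), ConvexOn ℝ univ (fun t : ℝ => f (x + t • b i))) :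
    ∃ M : ℝ, f x₀ ≤ M ∧ ∀ c : Fin n → ℝ, (∀ i, |c i| ≤ 1) →
      f (x₀ + ∑ i, c i • b i) ≤ M := by
  have hne : (Finset.univ : Finset (Fin n → Bool)).Nonempty := Finset.univ_nonempty
  set M : ℝ := Finset.univ.sup' hne
    (fun ε : Fin n → Bool => f (x₀ + ∑ i, (if ε i then (1:ℝ) else -1) • b i)) with hM
  have A : ∀ k : ℕ, ∀ c : Fin n → ℝ, (∀ i, |c i| ≤ 1) →
      (∀ i : Fin n, k ≤ (i:ℕ) → c i = 1 ∨ c i = -1) →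
      f (x₀ + ∑ i, c i • b i) ≤ M := by
    intro k
    induction k with
    | zero =>
      intro c hc1 hc2
      set ε : Fin n → Bool := fun i => if c i = 1 then true else false with hε
      have : ∑ i, c i • b i = ∑ i, (if ε i then (1:ℝ) else -1) • b i := by
        refine Finset.sum_congr rfl fun i _ => ?_
        rcases hc2 i (Nat.zero_le _) with h1 | h2
        · simp [hε, h1]
        · have h1 : c i ≠ 1 := by rw [h2]; norm_num
          rw [h2]; simp [hε, h1]
      rw [this]
      exact Finset.le_sup'
        (fun ε : Fin n → Bool => f (x₀ + ∑ i, (if ε i then (1:ℝ) else -1) • b i))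
        (Finset.mem_univ ε)
    | succ k IH =>
      intro c hc1 hc2
      by_cases hk : k < n
      · set i₀ : Fin n := ⟨k, hk⟩ with hi₀
        set z : V := x₀ + ∑ i, c i • b i - c i₀ • b i₀ with hz
        have harg : ∀ t : ℝ, z + t • b i₀ = x₀ + ∑ i, Function.update c i₀ t i • b i := by
          intro t; rw [hz, sum_update_smul]; abel
        have hu := hconv z i₀
        set θ : ℝ := (c i₀ + 1)/2 with hθ
        have h1 := abs_le.1 (hc1 i₀)
        have hθ0 : 0 ≤ θ := by rw [hθ]; linarith [h1.1]
        have hθ1 : θ ≤ 1 := by rw [hθ]; linarith [h1.2]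
        have hcc := convex_comb hu (-1) 1 θ hθ0 hθ1
        have hpt : (1-θ)*(-1) + θ*1 = c i₀ := by rw [hθ]; ring
        rw [hpt] at hcc
        have hupd : ∀ s : ℝ, |s| ≤ 1 → (s = 1 ∨ s = -1) →
            f (z + s • b i₀) ≤ M := by
          intro s hs hs2
          rw [harg s]
          refine IH _ (fun i => ?_) (fun i hi => ?_)
          · by_cases h : i = i₀
            · rw [h, Function.update_self]; exact hs
            · rw [Function.update_of_ne h]; exact hc1 i
          · by_cases h : i = i₀
            · rw [h, Function.update_self]; exact hs2
            · rw [Function.update_of_ne h]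
              refine hc2 i ?_
              have : (i:ℕ) ≠ k := fun hh => h (Fin.ext hh)
              omega
        have hm1 : f (z + (-1 : ℝ) • b i₀) ≤ M := hupd (-1) (by norm_num) (Or.inr rfl)
        have hp1 : f (z + (1 : ℝ) • b i₀) ≤ M := hupd 1 (by norm_num) (Or.inl rfl)
        have hpoint : z + c i₀ • b i₀ = x₀ + ∑ i, c i • b i := by rw [hz]; abel
        calc f (x₀ + ∑ i, c i • b i) = f (z + c i₀ • b i₀) := by rw [hpoint]
          _ ≤ (1-θ) * f (z + (-1:ℝ) • b i₀) + θ * f (z + (1:ℝ) • b i₀) := hcc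
          _ ≤ M := by nlinarith
      · refine IH c hc1 (fun i hi => hc2 i ?_)
        have := i.isLt; omega
  refine ⟨M, ?_, fun c hc1 => A n c hc1 (fun i hi => absurd hi (by have := i.isLt; omega))⟩
  -- f x₀ ≤ M : take c = 0
  have h0 := A n (fun _ => 0) (fun i => by norm_num)
    (fun i hi => absurd hi (by have := i.isLt; omega))
  simpa using h0

end Lip2

section Lip3
variable {V : Type*} [NormedAddCommGroup V] [NormedSpace ℝ V] {n : ℕ}
variable (b : Module.Basis (Fin n) ℝ V) (f : V → ℝ) (x₀ : V)

/-- Lower bound on the unit cube. -/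
lemma cube_lb
    (hconv : ∀ (x : V) (i : Fin n), ConvexOn ℝ univ (fun t : ℝ => f (x + t • b i))) :
    ∃ m : ℝ, m ≤ f x₀ ∧ ∀ c : Fin n → ℝ, (∀ i, |c i| ≤ 1) →
      m ≤ f (x₀ + ∑ i, c i • b i) := by
  obtain ⟨M, hMx, hub⟩ := cube_ub b f x₀ hconv
  set μ : ℕ → ℝ := fun j => Nat.rec (f x₀) (fun _ prev => 2*prev - M) j with hμ
  have B : ∀ j, j ≤ n → ∀ c : Fin n → ℝ, (∀ i, |c i| ≤ 1) →
      (∀ i : Fin n, (i:ℕ) < n - j → c i = 0) → μ j ≤ f (x₀ + ∑ i, c i • b i) := by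
    intro j
    induction j with
    | zero =>
      intro _ c hc1 hc0
      have : ∑ i, c i • b i = 0 := Finset.sum_eq_zero fun i _ => by
        rw [hc0 i (by have := i.isLt; omega), zero_smul]
      simp [this, hμ]
    | succ j IH =>
      intro hjn c hc1 hc0
      have hk : n - (j+1) < n := by omega
      set i₀ : Fin n := ⟨n - (j+1), hk⟩ with hi₀
      set z : V := x₀ + ∑ i, c i • b i - c i₀ • b i₀ with hz
      have harg : ∀ t : ℝ, z + t • b i₀ = x₀ + ∑ i, Function.update c i₀ t i • b i := by
        intro t; rw [hz, sum_update_smul]; abel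
      have hu := hconv z i₀
      have hcc := convex_comb hu (-(c i₀)) (c i₀) (1/2) (by norm_num) (by norm_num)
      have hpt : (1-(1:ℝ)/2)*(-(c i₀)) + (1/2)*(c i₀) = 0 := by ring
      rw [hpt] at hcc
      -- f (z + 0 • b i₀) ≥ μ j
      have h0 : μ j ≤ f (z + (0:ℝ) • b i₀) := by
        rw [harg 0]
        refine IH (by omega) _ (fun i => ?_) (fun i hi => ?_)
        · by_cases h : i = i₀
          · rw [h, Function.update_self]; norm_num
          · rw [Function.update_of_ne h]; exact hc1 i
        · by_cases h : i = i₀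
          · rw [h, Function.update_self]
          · rw [Function.update_of_ne h]
            refine hc0 i ?_
            have : (i:ℕ) ≠ n - (j+1) := fun hh => h (Fin.ext hh)
            omega
      have hneg : f (z + (-(c i₀)) • b i₀) ≤ M := by
        rw [harg (-(c i₀))]
        refine hub _ (fun i => ?_)
        by_cases h : i = i₀
        · rw [h, Function.update_self, abs_neg]; exact hc1 i₀
        · rw [Function.update_of_ne h]; exact hc1 i
      have hpoint : z + c i₀ • b i₀ = x₀ + ∑ i, c i • b i := by rw [hz]; abel
      have hμs : μ (j+1) = 2 * μ j - M := rfl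
      have hz0 : z + (0:ℝ) • b i₀ = z := by simp
      rw [hz0] at hcc h0
      rw [hμs]
      calc 2 * μ j - M ≤ 2 * f z - f (z + (-(c i₀)) • b i₀) := by linarith
        _ ≤ f (z + c i₀ • b i₀) := by linarith
        _ = f (x₀ + ∑ i, c i • b i) := by rw [hpoint]
  refine ⟨μ n, ?_, fun c hc1 => B n le_rfl c hc1 (fun i hi => absurd hi (by omega))⟩
  have h0 := B n le_rfl (fun _ => 0) (fun i => by norm_num) (fun i hi => absurd hi (by omega))
  simpa using h0

end Lip3

section Lip4
variable {V : Type*} [NormedAddCommGroup V] [NormedSpace ℝ V] {n : ℕ}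

/-- A function convex along all directions of a basis is Lipschitz at each point. -/
lemma lipAt (b : Module.Basis (Fin n) ℝ V) (f : V → ℝ)
    (hconv : ∀ (x : V) (i : Fin n), ConvexOn ℝ univ (fun t : ℝ => f (x + t • b i)))
    (x₀ : V) :
    ∃ ε > 0, ∃ L, 0 ≤ L ∧ ∀ y : V, ‖y - x₀‖ < ε → |f y - f x₀| ≤ L * ‖y - x₀‖ := by
  haveI : FiniteDimensional ℝ V := Module.Finite.of_basis b
  obtain ⟨M, hMx, hub⟩ := cube_ub b f x₀ hconv
  obtain ⟨m, hmx, hlb⟩ := cube_lb b f x₀ hconv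
  obtain ⟨Cb, hCb, hcoord⟩ := coord_bound b
  have hMm : 0 ≤ M - m := by linarith
  set K : ℝ := (M - m) * 2 / (1/2 : ℝ) with hK
  have hK0 : 0 ≤ K := by positivity
  refine ⟨1/(4*Cb), by positivity, n * (K * Cb), by positivity, fun y hy => ?_⟩
  set δ : Fin n → ℝ := fun i => b.repr (y - x₀) i with hδ
  have hδC : ∀ i, |δ i| ≤ Cb * ‖y - x₀‖ := fun i => hcoord (y - x₀) i
  have hδ4 : ∀ i, |δ i| ≤ 1/4 := by
    intro i
    have h2 : Cb * ‖y - x₀‖ ≤ Cb * (1/(4*Cb)) := mul_le_mul_of_nonneg_left hy.le hCb.le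
    have h3 : Cb * (1/(4*Cb)) = 1/4 := by field_simp
    exact (hδC i).trans (by rw [h3] at h2; exact h2)
  set p : ℕ → V := fun j => x₀ + ∑ i : Fin n, (if (i:ℕ) < j then δ i else 0) • b i with hp
  have hp0 : p 0 = x₀ := by simp [hp]
  have hpn : p n = y := by
    show x₀ + ∑ i : Fin n, (if (i:ℕ) < n then δ i else 0) • b i = y
    have h1 : ∑ i : Fin n, (if (i:ℕ) < n then δ i else 0) • b i = ∑ i, δ i • b i :=
      Finset.sum_congr rfl fun i _ => by rw [if_pos i.isLt]
    rw [h1, hδ]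
    have h2 := b.sum_repr (y - x₀)
    rw [h2]; abel
  have hstep : ∀ j (hj : j < n),
      |f (p (j+1)) - f (p j)| ≤ K * |δ ⟨j, hj⟩| := by
    intro j hj
    have hcji₀ : (if ((⟨j, hj⟩ : Fin n) : ℕ) < j then δ ⟨j, hj⟩ else 0) = 0 := by simp
    have harg : ∀ t : ℝ, p j + t • b ⟨j, hj⟩
        = x₀ + ∑ i : Fin n,
            Function.update (fun i : Fin n => if (i:ℕ) < j then δ i else 0) ⟨j, hj⟩ t i • b i := by
      intro t
      show (x₀ + ∑ i : Fin n, (if (i:ℕ) < j then δ i else 0) • b i) + t • b ⟨j, hj⟩ = _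
      rw [sum_update_smul]
      show _ = x₀ + ((∑ i : Fin n, (if (i:ℕ) < j then δ i else 0) • b i)
        - (if ((⟨j, hj⟩ : Fin n) : ℕ) < j then δ ⟨j, hj⟩ else 0) • b ⟨j, hj⟩ + t • b ⟨j, hj⟩)
      rw [hcji₀, zero_smul]; abel
    have hucv : ConvexOn ℝ univ (fun t : ℝ => f (p j + t • b ⟨j, hj⟩)) := hconv (p j) ⟨j, hj⟩
    have hbound : ∀ t : ℝ, |t| ≤ (1/2 : ℝ) →
        (∀ i, |Function.update (fun i : Fin n => if (i:ℕ) < j then δ i else 0) ⟨j, hj⟩ t i| ≤ 1) := by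
      intro t ht i
      by_cases h : i = (⟨j, hj⟩ : Fin n)
      · rw [h, Function.update_self]; linarith
      · rw [Function.update_of_ne h]
        show |if (i:ℕ) < j then δ i else 0| ≤ 1
        by_cases h2 : (i:ℕ) < j
        · rw [if_pos h2]; linarith [hδ4 i]
        · rw [if_neg h2]; norm_num
    have huub : ∀ t, |t| ≤ (1/2:ℝ) → f (p j + t • b ⟨j, hj⟩) ≤ M := by
      intro t ht; rw [harg t]; exact hub _ (hbound t ht)
    have hulb : ∀ t, |t| ≤ (1/2:ℝ) → m ≤ f (p j + t • b ⟨j, hj⟩) := by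
      intro t ht; rw [harg t]; exact hlb _ (hbound t ht)
    have hlip := oneVarLip hucv (by norm_num : (0:ℝ) < 1/2) huub hulb
      (δ ⟨j, hj⟩) 0 (by have := hδ4 ⟨j, hj⟩; norm_num at this ⊢; linarith) (by norm_num)
    have hps : p (j+1) = p j + δ ⟨j, hj⟩ • b ⟨j, hj⟩ := by
      rw [harg (δ ⟨j, hj⟩)]
      show x₀ + ∑ i : Fin n, (if (i:ℕ) < j + 1 then δ i else 0) • b i = _
      refine congrArg (fun s => x₀ + s) (Finset.sum_congr rfl fun i _ => ?_)
      by_cases h : i = (⟨j, hj⟩ : Fin n)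
      · rw [h, Function.update_self]
        rw [if_pos (by simp)]
      · rw [Function.update_of_ne h]
        show _ = (if (i:ℕ) < j then δ i else 0) • b i
        have hne : (i:ℕ) ≠ j := fun hh => h (Fin.ext hh)
        by_cases h2 : (i:ℕ) < j
        · rw [if_pos h2, if_pos (by omega)]
        · rw [if_neg h2, if_neg (by omega)]
    have e2 : p j + (0:ℝ) • b ⟨j, hj⟩ = p j := by simp
    have := hlip
    rw [sub_zero] at this
    calc |f (p (j+1)) - f (p j)|
        = |f (p j + δ ⟨j, hj⟩ • b ⟨j, hj⟩) - f (p j + (0:ℝ) • b ⟨j, hj⟩)| := by rw [hps, e2]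
      _ ≤ ((M-m)*2/(1/2)) * |δ ⟨j, hj⟩| := this
      _ = K * |δ ⟨j, hj⟩| := by rw [hK]
  have htel : f y - f x₀ = ∑ j ∈ Finset.range n, (f (p (j+1)) - f (p j)) := by
    rw [Finset.sum_range_sub (fun j => f (p j)) n, hp0, hpn]
  have habs : |f y - f x₀| ≤ ∑ j ∈ Finset.range n, |f (p (j+1)) - f (p j)| := by
    rw [htel]; exact Finset.abs_sum_le_sum_abs _ _
  refine habs.trans ?_
  have hsum : ∑ j ∈ Finset.range n, |f (p (j+1)) - f (p j)|
      ≤ ∑ _j ∈ Finset.range n, K * (Cb * ‖y - x₀‖) := by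
    refine Finset.sum_le_sum fun j hj => ?_
    have hjn := Finset.mem_range.1 hj
    exact (hstep j hjn).trans (mul_le_mul_of_nonneg_left (hδC ⟨j, hjn⟩) hK0)
  refine hsum.trans ?_
  rw [Finset.sum_const, Finset.card_range, nsmul_eq_mul]
  ring_nf
  exact le_refl _

end Lip4

section Gd
variable {V : Type*} [NormedAddCommGroup V] [NormedSpace ℝ V]

/-- ψ x t = g (x + t d) - t g(d); antitone in t when g is 1-homogeneous,
convex along d, and Lipschitz at d. -/
lemma psi_antitone (g : V → ℝ) (d : V)
    (hconvd : ∀ x : V, ConvexOn ℝ Set.univ (fun t : ℝ => g (x + t • d)))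
    (hhom : ∀ t : ℝ, 0 < t → ∀ x : V, g (t • x) = t * g x)
    {ε L : ℝ} (hε : 0 < ε) (hL : 0 ≤ L)
    (hLip : ∀ y : V, ‖y - d‖ < ε → |g y - g d| ≤ L * ‖y - d‖)
    (x : V) {s t : ℝ} (hst : s ≤ t) :
    g (x + t • d) - t * g d ≤ g (x + s • d) - s * g d := by
  rcases eq_or_lt_of_le hst with rfl | hst
  · exact le_rfl
  set T : ℝ := ‖x‖/ε + 1 with hT
  have hT0 : 0 < T := by positivity
  -- upper bound for φ u for u ≥ T
  have hφub : ∀ u : ℝ, T ≤ u → g (x + u • d) ≤ u * g d + L * ‖x‖ := by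
    intro u hu
    have hu0 : 0 < u := lt_of_lt_of_le hT0 hu
    have heq : x + u • d = u • (u⁻¹ • x + d) := by
      rw [smul_add, smul_smul, mul_inv_cancel₀ (ne_of_gt hu0), one_smul]
    have hnorm : ‖(u⁻¹ • x + d) - d‖ = ‖x‖ / u := by
      rw [add_sub_cancel_right, norm_smul, norm_inv, Real.norm_eq_abs,
        abs_of_pos hu0, div_eq_inv_mul]
    have hclose : ‖(u⁻¹ • x + d) - d‖ < ε := by
      rw [hnorm]
      rw [div_lt_iff₀ hu0]
      have : ‖x‖ / ε < T := by rw [hT]; linarith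
      have h2 : ‖x‖ < T * ε := by rw [hT]; rw [add_mul, div_mul_cancel₀ _ (ne_of_gt hε)]; linarith
      calc ‖x‖ < T * ε := h2
        _ ≤ ε * u := by rw [mul_comm]; exact mul_le_mul_of_nonneg_left hu hε.le
    have hlip := (abs_le.1 (hLip _ hclose)).2
    rw [hnorm] at hlip
    have : g (u⁻¹ • x + d) ≤ g d + L * (‖x‖ / u) := by linarith
    calc g (x + u • d) = u * g (u⁻¹ • x + d) := by rw [heq, hhom u hu0]
      _ ≤ u * (g d + L * (‖x‖ / u)) := mul_le_mul_of_nonneg_left this hu0.le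
      _ = u * g d + L * ‖x‖ := by field_simp
  have key : ∀ ε' : ℝ, 0 < ε' →
      g (x + t • d) - g (x + s • d) ≤ (t - s) * g d + (t - s) * ε' := by
    intro ε' hε'
    set C : ℝ := L * ‖x‖ - g (x + s • d) with hC
    set u : ℝ := max (max T (t+1)) (s + (|C| + |s * g d|)/ε' + 1) with hu
    have huT : T ≤ u := le_trans (le_max_left _ _) (le_max_left _ _)
    have hut : t + 1 ≤ u := le_trans (le_max_right _ _) (le_max_left _ _)
    have hus : s + (|C| + |s * g d|)/ε' + 1 ≤ u := le_max_right _ _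
    have hden : 0 < u - s := by linarith
    set θ : ℝ := (t - s)/(u - s) with hθ
    have hθ0 : 0 ≤ θ := div_nonneg (by linarith) (by linarith)
    have hθ1 : θ ≤ 1 := by rw [hθ, div_le_one hden]; linarith
    have hmul : θ * (u - s) = t - s := div_mul_cancel₀ _ (ne_of_gt hden)
    have hpt : (1-θ)*s + θ*u = t := by nlinarith [hmul]
    have hcc := convex_comb (hconvd x) s u θ hθ0 hθ1
    rw [hpt] at hcc
    have h1 : g (x + t • d) - g (x + s • d) ≤ θ * (g (x + u • d) - g (x + s • d)) := by
      nlinarith [hcc]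
    have h2 : g (x + u • d) - g (x + s • d) ≤ u * g d + C := by
      have := hφub u huT; rw [hC]; linarith
    have h3 : g (x + t • d) - g (x + s • d) ≤ θ * (u * g d + C) :=
      h1.trans (mul_le_mul_of_nonneg_left h2 hθ0)
    have hexp : θ * (u * g d + C) = (t - s) * g d + θ * (C + s * g d) := by
      linear_combination g d * hmul
    have hdiv : ε' * ((|C| + |s * g d|)/ε') = |C| + |s * g d| := by field_simp
    have h6 : |C| + |s * g d| + ε' ≤ ε' * (u - s) := by
      have h : (|C| + |s * g d|)/ε' + 1 ≤ u - s := by linarith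
      have h' := mul_le_mul_of_nonneg_left h hε'.le
      rw [mul_add, mul_one, hdiv] at h'
      linarith
    have h7 : C + s * g d ≤ ε' * (u - s) := by
      have := le_abs_self C
      have := le_abs_self (s * g d)
      linarith
    have h8 : θ * (C + s * g d) ≤ θ * (ε' * (u - s)) :=
      mul_le_mul_of_nonneg_left h7 hθ0
    have h9 : θ * (ε' * (u - s)) = (t - s) * ε' := by
      linear_combination ε' * hmul
    linarith
  have final : g (x + t • d) - g (x + s • d) ≤ (t - s) * g d := by
    refine le_of_forall_pos_le_add fun ε' hε' => ?_
    have h := key (ε'/(t-s)) (div_pos hε' (by linarith))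
    have : (t-s) * (ε'/(t-s)) = ε' := by
      rw [mul_comm, div_mul_cancel₀ _ (by linarith : t - s ≠ 0)]
    linarith
  linarith

end Gd

section Gd2
variable {V : Type*} [NormedAddCommGroup V] [NormedSpace ℝ V]

lemma exists_gd (g : V → ℝ) (d : V)
    (hconvd : ∀ x : V, ConvexOn ℝ Set.univ (fun t : ℝ => g (x + t • d)))
    (hhom : ∀ t : ℝ, 0 < t → ∀ x : V, g (t • x) = t * g x)
    {ε L : ℝ} (hε : 0 < ε) (hL : 0 ≤ L)
    (hLip : ∀ y : V, ‖y - d‖ < ε → |g y - g d| ≤ L * ‖y - d‖) :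
    ∃ G : V → ℝ,
      (∀ x, G x ≤ g x) ∧
      (∀ c : ℝ, 0 < c → ∀ x, G (c • x) = c * G x) ∧
      (∀ x (c : ℝ), G (x + c • d) = G x + c * g d) ∧
      (∀ (x v : V), (∀ z : V, ConvexOn ℝ Set.univ (fun s : ℝ => g (z + s • v))) →
        ConvexOn ℝ Set.univ (fun s : ℝ => G (x + s • v))) := by
  set ψ : V → ℝ → ℝ := fun x t => g (x + t • d) - t * g d with hψ
  have anti : ∀ (x : V) {s t : ℝ}, s ≤ t → ψ x t ≤ ψ x s := by
    intro x s t hst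
    exact psi_antitone g d hconvd hhom hε hL hLip x hst
  have hφlb : ∀ (x : V) (u : ℝ), ‖x‖/ε + 1 ≤ u → -(L * ‖x‖) ≤ ψ x u := by
    intro x u hu
    have hT0 : (0:ℝ) < ‖x‖/ε + 1 := by positivity
    have hu0 : 0 < u := lt_of_lt_of_le hT0 hu
    have heq : x + u • d = u • (u⁻¹ • x + d) := by
      rw [smul_add, smul_smul, mul_inv_cancel₀ (ne_of_gt hu0), one_smul]
    have hnorm : ‖(u⁻¹ • x + d) - d‖ = ‖x‖ / u := by
      rw [add_sub_cancel_right, norm_smul, norm_inv, Real.norm_eq_abs,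
        abs_of_pos hu0, div_eq_inv_mul]
    have hclose : ‖(u⁻¹ • x + d) - d‖ < ε := by
      rw [hnorm, div_lt_iff₀ hu0]
      have h2 : ‖x‖ < (‖x‖/ε + 1) * ε := by
        rw [add_mul, div_mul_cancel₀ _ (ne_of_gt hε)]; linarith
      calc ‖x‖ < (‖x‖/ε + 1) * ε := h2
        _ ≤ ε * u := by rw [mul_comm]; exact mul_le_mul_of_nonneg_left hu hε.le
    have hlip := (abs_le.1 (hLip _ hclose)).1
    rw [hnorm] at hlip
    have h3 : g d - L * (‖x‖/u) ≤ g (u⁻¹ • x + d) := by linarith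
    have h4 : u * (g d - L * (‖x‖/u)) ≤ u * g (u⁻¹ • x + d) :=
      mul_le_mul_of_nonneg_left h3 hu0.le
    have h5 : u * (g d - L * (‖x‖/u)) = u * g d - L * ‖x‖ := by field_simp
    have h6 : g (x + u • d) = u * g (u⁻¹ • x + d) := by rw [heq, hhom u hu0]
    show -(L * ‖x‖) ≤ g (x + u • d) - u * g d
    rw [h6]; linarith
  have lb : ∀ (x : V) (t : ℝ), -(L * ‖x‖) ≤ ψ x t := by
    intro x t
    have h1 := anti x (le_max_left t (‖x‖/ε + 1))
    have h2 := hφlb x (max t (‖x‖/ε + 1)) (le_max_right _ _)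
    exact le_trans h2 h1
  have bdd : ∀ x : V, BddBelow (ψ x '' Set.Ioi 0) := by
    intro x
    exact ⟨-(L * ‖x‖), by rintro _ ⟨t, _, rfl⟩; exact lb x t⟩
  have hne : ∀ x : V, (ψ x '' Set.Ioi 0).Nonempty :=
    fun x => ⟨ψ x 1, Set.mem_image_of_mem _ (by norm_num)⟩
  set G : V → ℝ := fun x => sInf (ψ x '' Set.Ioi 0) with hG
  have hGle : ∀ (x : V) (t : ℝ), 0 < t → G x ≤ ψ x t :=
    fun x t ht => csInf_le (bdd x) (Set.mem_image_of_mem _ ht)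
  have hGge : ∀ (x : V) (c : ℝ), (∀ t : ℝ, 0 < t → c ≤ ψ x t) → c ≤ G x := by
    intro x c hc
    exact le_csInf (hne x) (by rintro _ ⟨t, ht, rfl⟩; exact hc t ht)
  have hψ0 : ∀ x : V, ψ x 0 = g x := by intro x; simp [hψ]
  refine ⟨G, ?_, ?_, ?_, ?_⟩
  · -- G ≤ g
    intro x
    have h1 := hGle x 1 one_pos
    have h2 := anti x (zero_le_one)
    rw [hψ0] at h2
    linarith
  · -- homogeneity
    intro c hc x
    have hkey : ∀ s : ℝ, ψ (c • x) (c * s) = c * ψ x s := by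
      intro s
      show g (c • x + (c*s) • d) - (c*s) * g d = c * (g (x + s • d) - s * g d)
      have : c • x + (c*s) • d = c • (x + s • d) := by
        rw [smul_add, smul_smul]
      rw [this, hhom c hc]; ring
    have h1 : G (c • x) ≤ c * G x := by
      have : ∀ s : ℝ, 0 < s → G (c • x) / c ≤ ψ x s := by
        intro s hs
        have := hGle (c • x) (c * s) (by positivity)
        rw [hkey s] at this
        rw [div_le_iff₀ hc]; linarith [this]
      have h2 := hGge x _ this
      rw [div_le_iff₀ hc] at h2; linarith
    have h2 : c * G x ≤ G (c • x) := by
      refine hGge (c • x) _ (fun t ht => ?_)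
      have hts : t = c * (t / c) := by field_simp
      have h3 := hGle x (t/c) (by positivity)
      calc c * G x ≤ c * ψ x (t/c) := mul_le_mul_of_nonneg_left h3 hc.le
        _ = ψ (c • x) (c * (t/c)) := (hkey _).symm
        _ = ψ (c • x) t := by rw [← hts]
    linarith
  · -- affine along d
    intro x c
    have hkey : ∀ t : ℝ, ψ (x + c • d) t = ψ x (t + c) + c * g d := by
      intro t
      show g (x + c • d + t • d) - t * g d = (g (x + (t+c) • d) - (t+c) * g d) + c * g d
      have : x + c • d + t • d = x + (t+c) • d := by
        rw [add_smul]; abel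
      rw [this]; ring
    have h1 : G (x + c • d) ≤ G x + c * g d := by
      have : ∀ s : ℝ, 0 < s → G (x + c • d) - c * g d ≤ ψ x s := by
        intro s hs
        set t : ℝ := s + |c| + 1 with ht
        have ht0 : 0 < t := by have := abs_nonneg c; rw [ht]; linarith
        have h2 := hGle (x + c • d) t ht0
        rw [hkey t] at h2
        have h3 : ψ x (t + c) ≤ ψ x s := anti x (by have := neg_abs_le c; rw [ht]; linarith)
        linarith
      linarith [hGge x _ this]
    have h2 : G x + c * g d ≤ G (x + c • d) := by
      refine hGge (x + c • d) _ (fun t ht => ?_)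
      rw [hkey t]
      rcases le_or_gt (t + c) 0 with h | h
      · have h3 := hGle x 1 one_pos
        have h4 : ψ x 1 ≤ ψ x (t + c) := anti x (by linarith)
        linarith
      · have h3 := hGle x (t + c) h
        linarith
    linarith
  · -- slice convexity
    intro x v hv
    constructor
    · exact convex_univ
    · intro s₁ _ s₂ _ a b ha hb hab
      simp only [smul_eq_mul]
      refine le_of_forall_pos_le_add fun ε'' hε'' => ?_
      obtain ⟨y₁, hy₁mem, hy₁lt⟩ := exists_lt_of_csInf_lt (hne (x + s₁ • v))
        (lt_add_of_pos_right (G (x + s₁ • v)) hε'')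
      obtain ⟨y₂, hy₂mem, hy₂lt⟩ := exists_lt_of_csInf_lt (hne (x + s₂ • v))
        (lt_add_of_pos_right (G (x + s₂ • v)) hε'')
      obtain ⟨t₁, ht₁, rfl⟩ := hy₁mem
      obtain ⟨t₂, ht₂, rfl⟩ := hy₂mem
      rw [Set.mem_Ioi] at ht₁ ht₂
      set t : ℝ := max t₁ t₂ with htdef
      have ht0 : 0 < t := lt_of_lt_of_le ht₁ (le_max_left _ _)
      have hm1 : ψ (x + s₁ • v) t ≤ ψ (x + s₁ • v) t₁ := anti _ (le_max_left _ _)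
      have hm2 : ψ (x + s₂ • v) t ≤ ψ (x + s₂ • v) t₂ := anti _ (le_max_right _ _)
      have hcv := (hv (x + t • d)).2 (Set.mem_univ s₁) (Set.mem_univ s₂) ha hb hab
      simp only [smul_eq_mul] at hcv
      have harr : ∀ s : ℝ, x + t • d + s • v = (x + s • v) + t • d := by
        intro s; abel
      rw [harr, harr, harr] at hcv
      have hmid : ψ (x + (a*s₁ + b*s₂) • v) t ≤ a * ψ (x + s₁ • v) t + b * ψ (x + s₂ • v) t := by
        show g ((x + (a*s₁+b*s₂) • v) + t • d) - t * g d ≤ _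
        have hexp : a * ψ (x + s₁ • v) t + b * ψ (x + s₂ • v) t
            = a * g ((x + s₁ • v) + t • d) + b * g ((x + s₂ • v) + t • d) - t * g d := by
          show a * (g ((x + s₁ • v) + t • d) - t * g d) + b * (g ((x + s₂ • v) + t • d) - t * g d) = _
          linear_combination (-(t * g d)) * hab
        rw [hexp]
        have := hcv
        linarith
      have h1 := hGle (x + (a*s₁+b*s₂) • v) t ht0
      have h2 : a * ψ (x + s₁ • v) t ≤ a * (G (x + s₁ • v) + ε'') := by
        apply mul_le_mul_of_nonneg_left _ ha
        linarith
      have h3 : b * ψ (x + s₂ • v) t ≤ b * (G (x + s₂ • v) + ε'') := by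
        apply mul_le_mul_of_nonneg_left _ hb
        linarith
      have hab1 : a + b = 1 := hab
      nlinarith [h1, hmid, h2, h3]

end Gd2

lemma linear_convexOn (c : ℝ) : ConvexOn ℝ Set.univ (fun s : ℝ => c * s) := by
  constructor
  · exact convex_univ
  · intro x _ y _ a b _ _ _
    simp only [smul_eq_mul]
    exact le_of_eq (by ring)

universe u

lemma core : ∀ (n : ℕ), ∀ {V : Type u} [NormedAddCommGroup V] [NormedSpace ℝ V]
    [FiniteDimensional ℝ V], Module.finrank ℝ V ≤ n →
    ∀ (D : Set V), (∀ t : ℝ, ∀ x ∈ D, t • x ∈ D) → Submodule.span ℝ D = ⊤ →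
    ∀ g : V → ℝ, (∀ (x : V), ∀ v ∈ D, ConvexOn ℝ Set.univ (fun s : ℝ => g (x + s • v))) →
    (∀ t : ℝ, 0 < t → ∀ x : V, g (t • x) = t * g x) →
    ∃ ℓ : V →ₗ[ℝ] ℝ, ∀ x, ℓ x ≤ g x := by
  intro n
  induction n with
  | zero =>
    intro V _ _ _ hn D hbal hspan g hslice hhom
    haveI : Subsingleton V := by
      rw [← Module.finrank_zero_iff (R := ℝ)]; omega
    refine ⟨0, fun x => ?_⟩
    have hx0 : x = (0:V) := Subsingleton.elim _ _
    have hg0 : g 0 = 0 := by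
      have h2 := hhom 2 (by norm_num) 0
      rw [smul_zero] at h2; linarith
    simp [hx0, hg0]
  | succ n IH =>
    intro V _ _ _ hn D hbal hspan g hslice hhom
    by_cases hle : Module.finrank ℝ V ≤ n
    · exact IH hle D hbal hspan g hslice hhom
    have hrank : Module.finrank ℝ V = n + 1 := by omega
    haveI : Nontrivial V := by
      rw [← Module.finrank_pos_iff (R := ℝ)]; omega
    -- a nonzero direction in D
    have hd : ∃ d ∈ D, d ≠ 0 := by
      by_contra h
      push_neg at h
      have hD0 : D ⊆ {(0:V)} := fun x hx => h x hx
      have : Submodule.span ℝ D ≤ Submodule.span ℝ {(0:V)} := Submodule.span_mono hD0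
      rw [hspan, Submodule.span_singleton_eq_bot.2 rfl] at this
      exact absurd (le_bot_iff.1 this) top_ne_bot
    obtain ⟨d, hdD, hd0⟩ := hd
    -- a basis of V inside D
    obtain ⟨s, hsD, hs_span, hs_li⟩ := exists_linearIndependent ℝ D
    rw [hspan] at hs_span
    have hfin : s.Finite := hs_li.setFinite
    haveI := hfin.fintype
    let bs : Module.Basis s ℝ V := Module.Basis.mk hs_li (by rw [Subtype.range_coe]; rw [hs_span])
    let bF : Module.Basis (Fin (Fintype.card s)) ℝ V := bs.reindex (Fintype.equivFin s)
    have hbFD : ∀ i, (bF i : V) ∈ D := by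
      intro i
      have : bF i = bs ((Fintype.equivFin s).symm i) := by rw [Module.Basis.reindex_apply]
      rw [this, Module.Basis.mk_apply]
      exact hsD ((Fintype.equivFin s).symm i).2
    -- Lipschitz at d
    obtain ⟨ε, hε, L, hL, hLip⟩ := lipAt bF g
      (fun x i => hslice x (bF i) (hbFD i)) d
    -- the reduced cone function G
    obtain ⟨G, hGle, hGhom, hGaff, hGslice⟩ :=
      exists_gd g d (fun x => hslice x d hdD) hhom hε hL hLip
    -- complement of span {d}
    obtain ⟨W, hW⟩ := Submodule.exists_isCompl (Submodule.span ℝ {d})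
    set π : V →ₗ[ℝ] W := Submodule.linearProjOfIsCompl W (Submodule.span ℝ {d}) hW.symm with hπ
    set π' : V →ₗ[ℝ] (Submodule.span ℝ {d}) :=
      Submodule.linearProjOfIsCompl (Submodule.span ℝ {d}) W hW with hπ'
    have hdecomp : ∀ x : V, ((π' x : V)) + ((π x : V)) = x := fun x =>
      Submodule.projection_add_projection_eq_self hW x
    set e : ℝ ≃ₗ[ℝ] (Submodule.span ℝ {d}) := LinearEquiv.toSpanNonzeroSingleton ℝ V d hd0
    set τ : V →ₗ[ℝ] ℝ := e.symm.toLinearMap.comp π' with hτ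
    have hτd : ∀ x : V, (π' x : V) = τ x • d := by
      intro x
      have h1 : e (τ x) = π' x := e.apply_symm_apply (π' x)
      have h2 : ((e (τ x) : Submodule.span ℝ {d}) : V) = τ x • d := rfl
      rw [← h1, h2]
    have hxdecomp : ∀ x : V, x = (π x : V) + τ x • d := by
      intro x
      have := hdecomp x
      rw [hτd x] at this
      linear_combination (norm := module) -this
    -- data on W
    have hrankW : Module.finrank ℝ (↥W) ≤ n := by
      have h1 := Submodule.finrank_add_eq_of_isCompl hW
      rw [finrank_span_singleton hd0] at h1
      omega
    set DW : Set ↥W := (fun x => π x) '' D with hDW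
    have hbalW : ∀ t : ℝ, ∀ w ∈ DW, t • w ∈ DW := by
      rintro t _ ⟨x, hx, rfl⟩
      exact ⟨t • x, hbal t x hx, by show π (t • x) = t • π x; exact map_smul π t x⟩
    have hspanW : Submodule.span ℝ DW = ⊤ := by
      rw [hDW, Submodule.span_image, hspan, Submodule.map_top, LinearMap.range_eq_top]
      intro w
      exact ⟨(w : V), Submodule.linearProjOfIsCompl_apply_left hW.symm w⟩
    set gW : ↥W → ℝ := fun w => G (w : V) with hgW
    have hhomW : ∀ t : ℝ, 0 < t → ∀ w : ↥W, gW (t • w) = t * gW w := by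
      intro t ht w
      show G ((t • w : ↥W) : V) = t * G (w : V)
      rw [Submodule.coe_smul]
      exact hGhom t ht (w : V)
    have hsliceW : ∀ (w : ↥W), ∀ v' ∈ DW, ConvexOn ℝ Set.univ (fun s : ℝ => gW (w + s • v')) := by
      rintro w _ ⟨v, hvD, rfl⟩
      have hsplit : (π v : V) = v + (-(τ v)) • d := by
        have := hxdecomp v
        linear_combination (norm := module) -this
      have hfun : (fun s : ℝ => gW (w + s • π v))
          = fun s : ℝ => G ((w : V) + s • v) + (-(τ v * g d)) * s := by
        funext s
        show G (((w + s • π v : ↥W) : V)) = _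
        rw [Submodule.coe_add, Submodule.coe_smul, hsplit]
        have harg : (w : V) + s • (v + (-(τ v)) • d) = ((w : V) + s • v) + (-(s * τ v)) • d := by
          rw [smul_add, smul_smul]
          linear_combination (norm := module) (0:V)
        rw [harg, hGaff]
        ring
      rw [hfun]
      exact (hGslice (w : V) v (fun z => hslice z v hvD)).add (linear_convexOn _)
    obtain ⟨ℓW, hℓW⟩ := IH hrankW DW hbalW hspanW gW hsliceW hhomW
    refine ⟨(ℓW.comp π) + (g d) • τ, fun x => ?_⟩
    have h1 : ℓW (π x) ≤ G ((π x : V)) := hℓW (π x)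
    have h2 : G ((π x : V)) + τ x * g d = G x := by
      have := hGaff ((π x : V)) (τ x)
      rw [← hxdecomp x] at this
      linarith
    have h3 : G x ≤ g x := hGle x
    have hshow : (ℓW.comp π + (g d) • τ) x = ℓW (π x) + g d * τ x := rfl
    rw [hshow]
    linarith

/-- D-convexity of a real-valued function on a set `S`. -/
def DConvexOn {V : Type*} [NormedAddCommGroup V] [NormedSpace ℝ V]
    (D S : Set V) (f : V → ℝ) : Prop :=
  ∀ ⦃x y : V⦄, x ∈ S → y ∈ S → x - y ∈ D → segment ℝ x y ⊆ S →
    ConvexOn ℝ (segment ℝ x y) f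

/-- Proposition: D-subcone implies subdifferential: if `f` admits
at `x₀` a D-convex positively 1-homogeneous minorant cone, then `f` admits a
linear subdifferential at `x₀`. -/
theorem subcone_implies_subdifferential
    {V : Type*} [NormedAddCommGroup V] [NormedSpace ℝ V] [FiniteDimensional ℝ V]
    (D : Set V) (hDbal : ∀ (t : ℝ), ∀ x ∈ D, t • x ∈ D)
    (hDspan : Submodule.span ℝ D = ⊤)
    (C : Set V) (hCopen : IsOpen C)
    (f : V → ℝ) (x₀ : V) (hx₀ : x₀ ∈ C)
    (g : V → ℝ) (hg : DConvexOn D Set.univ g)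
    (hghom : ∀ t : ℝ, 0 < t → ∀ x : V, g (t • x) = t * g x)
    (hsub : ∀ y ∈ C, f x₀ + g (y - x₀) ≤ f y) :
    ∃ ℓ : V →ₗ[ℝ] ℝ, ∀ y ∈ C, f x₀ + ℓ (y - x₀) ≤ f y := by
  have hslice : ∀ (x : V), ∀ v ∈ D, ConvexOn ℝ Set.univ (fun s : ℝ => g (x + s • v)) := by
    intro x v hv
    constructor
    · exact convex_univ
    · intro t₁ _ t₂ _ a b ha hb hab
      simp only [smul_eq_mul]
      have hmem : (x + t₁ • v) - (x + t₂ • v) ∈ D := by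
        have he : (x + t₁ • v) - (x + t₂ • v) = (t₁ - t₂) • v := by
          rw [sub_smul]; abel
        rw [he]; exact hDbal _ v hv
      have hseg := hg (Set.mem_univ (x + t₁ • v)) (Set.mem_univ (x + t₂ • v)) hmem
        (Set.subset_univ _)
      have h := hseg.2 (left_mem_segment ℝ _ _) (right_mem_segment ℝ _ _) ha hb hab
      have harg : a • (x + t₁ • v) + b • (x + t₂ • v) = x + (a*t₁ + b*t₂) • v := by
        have hab' : a + b = 1 := hab
        match_scalars
        all_goals linarith [hab']

      rw [harg] at h
      exact h
  obtain ⟨ℓ, hℓ⟩ := core (Module.finrank ℝ V) le_rfl D hDbal hDspan g hslice hghom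
  exact ⟨ℓ, fun y hy => by linarith [hℓ (y - x₀), hsub y hy]⟩
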